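/- arXiv:1909.09982 — 4 statements merged into one kernel-verified Lean document; each statement's English description precedes it below -/
import Mathlib

section
/- Let E, F, G be real Banach spaces, x₀ ∈ E, R > 0 and L ≥ 0. Let T : E × F → G be a map such that T(x,·) : F → G is linear for every x, and such that for all x, y in the open ball B_R(x₀) of E and all v, w ∈ F with ‖v‖ < R and ‖w‖ < R one has ‖T(x,v) − T(y,w)‖ ≤ L · max(‖x−y‖, ‖v−w‖). Then for all x, y ∈ B_R(x₀) and ALL v ∈ F one has ‖T(x,v) − T(y,v)‖ ≤ (2L/R) · ‖v‖ · ‖x−y‖. -/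
open Metric

/-- **Rescaling estimate for maps linear in the second variable.**
If `T : E × F → G` is linear in its second argument and satisfies a Lipschitz-type bound
`‖T x v - T y w‖ ≤ L * max ‖x - y‖ ‖v - w‖` for `x, y` in the ball `B_R(x₀)` and `‖v‖, ‖w‖ < R`,
then for all `x, y ∈ B_R(x₀)` and *all* `v ∈ F` one has
`‖T x v - T y v‖ ≤ (2L/R) * ‖v‖ * ‖x - y‖`. -/
theorem lipschitz_rescaling_of_linear_second
    {E F G : Type*}
    [NormedAddCommGroup E] [NormedSpace ℝ E]
    [NormedAddCommGroup F] [NormedSpace ℝ F]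
    [NormedAddCommGroup G] [NormedSpace ℝ G]
    (x₀ : E) (R L : ℝ) (hR : 0 < R) (hL : 0 ≤ L)
    (T : E → F → G) (hlin : ∀ x : E, IsLinearMap ℝ (T x))
    (hbound : ∀ x ∈ ball x₀ R, ∀ y ∈ ball x₀ R, ∀ v w : F, ‖v‖ < R → ‖w‖ < R →
      ‖T x v - T y w‖ ≤ L * max ‖x - y‖ ‖v - w‖) :
    ∀ x ∈ ball x₀ R, ∀ y ∈ ball x₀ R, ∀ v : F,
      ‖T x v - T y v‖ ≤ (2 * L / R) * ‖v‖ * ‖x - y‖ := by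
  intro x hx y hy v
  rcases eq_or_ne v 0 with rfl | hv
  · simp [(hlin x).map_zero, (hlin y).map_zero]
  · have hv0 : (0:ℝ) < ‖v‖ := norm_pos_iff.mpr hv
    set c : ℝ := R / (2 * ‖v‖) with hc
    have hc0 : 0 < c := by positivity
    set w : F := c • v with hw
    have hwn : ‖w‖ = R / 2 := by
      rw [hw, norm_smul, Real.norm_of_nonneg hc0.le, hc]
      field_simp
    have hwR : ‖w‖ < R := by rw [hwn]; linarith
    have key := hbound x hx y hy w w hwR hwR
    have hmax : max ‖x - y‖ ‖w - w‖ = ‖x - y‖ := by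
      simp [max_eq_left (norm_nonneg _)]
    rw [hmax] at key
    have hTx : T x v = c⁻¹ • T x w := by
      rw [hw, (hlin x).map_smul, smul_smul, inv_mul_cancel₀ hc0.ne', one_smul]
    have hTy : T y v = c⁻¹ • T y w := by
      rw [hw, (hlin y).map_smul, smul_smul, inv_mul_cancel₀ hc0.ne', one_smul]
    have : ‖T x v - T y v‖ = c⁻¹ * ‖T x w - T y w‖ := by
      rw [hTx, hTy, ← smul_sub, norm_smul, Real.norm_of_nonneg (by positivity)]
    rw [this]
    have hcinv : c⁻¹ = 2 * ‖v‖ / R := by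
      rw [hc]; field_simp
    rw [hcinv]
    calc 2 * ‖v‖ / R * ‖T x w - T y w‖ ≤ 2 * ‖v‖ / R * (L * ‖x - y‖) := by
          apply mul_le_mul_of_nonneg_left key (by positivity)
      _ = 2 * L / R * ‖v‖ * ‖x - y‖ := by ring
end

section
/- Let E and H be separable real Hilbert spaces, let (e_k)_{k∈ℕ} be a Hilbert basis of E, and let (λ_k)_{k∈ℕ} be nonnegative real numbers with ∑_k λ_k < ∞. Let U ⊆ H, let σ : H → L(E,H) be Fréchet differentiable on a neighbourhood of U with derivative σ′ : H → L(H,L(E,H)), and suppose there are constants M, M′, L, L′ ≥ 0 such that for all x, y ∈ U: ‖σ(x)‖_{op} ≤ M, ‖σ′(x)‖_{op} ≤ M′, ‖σ(x) − σ(y)‖_{op} ≤ L‖x−y‖, and ‖σ′(x) − σ′(y)‖_{op} ≤ L′‖x−y‖. Then the map T : U → H, T(x) = ∑_k λ_k · (σ′(x)(σ(x) e_k))(e_k), is well defined and satisfies, for all x, y ∈ U: ‖T(x) − T(y)‖ ≤ (L′·M + M′·L) · (∑_k λ_k) · ‖x−y‖. -/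
/-- **Lipschitz estimate for the Itô–Stratonovich correction `tr[σ′(x)σ(x)Q]`.**
Let `(e k)` be a Hilbert basis of `E` and `(λ k)` nonnegative summable weights (eigenvalues of a
trace-class covariance operator `Q`).  If `σ : H → L(E,H)` is Fréchet differentiable on an open
neighbourhood `V` of `U` with derivative `σ'` and on `U` both `σ` and `σ'` are bounded
(by `M`, `M'`) and Lipschitz (with constants `L`, `L'`) in operator norm, then the correction
term `T x = ∑ k, λ k • ((σ' x) ((σ x) (e k))) (e k)` is well defined on `U` and satisfies
`‖T x - T y‖ ≤ (L'·M + M'·L) · (∑ k, λ k) · ‖x - y‖` for all `x, y ∈ U`. -/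
theorem stratonovichCorrection_lipschitz
    {E H : Type*}
    [NormedAddCommGroup E] [InnerProductSpace ℝ E] [CompleteSpace E]
    [TopologicalSpace.SeparableSpace E]
    [NormedAddCommGroup H] [InnerProductSpace ℝ H] [CompleteSpace H]
    [TopologicalSpace.SeparableSpace H]
    (e : HilbertBasis ℕ ℝ E) (lam : ℕ → ℝ) (hlam : ∀ k, 0 ≤ lam k)
    (hsum : Summable lam)
    (U V : Set H) (hUV : U ⊆ V) (hV : IsOpen V)
    (σ : H → (E →L[ℝ] H)) (σ' : H → (H →L[ℝ] (E →L[ℝ] H)))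
    (hderiv : ∀ x ∈ V, HasFDerivAt σ (σ' x) x)
    (M M' L L' : ℝ) (hM : 0 ≤ M) (hM' : 0 ≤ M') (hL : 0 ≤ L) (hL' : 0 ≤ L')
    (hbddσ : ∀ x ∈ U, ‖σ x‖ ≤ M)
    (hbddσ' : ∀ x ∈ U, ‖σ' x‖ ≤ M')
    (hlipσ : ∀ x ∈ U, ∀ y ∈ U, ‖σ x - σ y‖ ≤ L * ‖x - y‖)
    (hlipσ' : ∀ x ∈ U, ∀ y ∈ U, ‖σ' x - σ' y‖ ≤ L' * ‖x - y‖) :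
    (∀ x ∈ U, Summable (fun k => lam k • ((σ' x) ((σ x) (e k))) (e k))) ∧
      ∀ x ∈ U, ∀ y ∈ U,
        ‖(∑' k, lam k • ((σ' x) ((σ x) (e k))) (e k)) -
            (∑' k, lam k • ((σ' y) ((σ y) (e k))) (e k))‖ ≤
          (L' * M + M' * L) * (∑' k, lam k) * ‖x - y‖ := by
  have hek : ∀ k, ‖(e k : E)‖ = 1 := fun k => e.orthonormal.1 k
  -- termwise bound for a single point
  have hterm : ∀ x ∈ U, ∀ k, ‖lam k • ((σ' x) ((σ x) (e k))) (e k)‖ ≤ lam k * (M' * M) := by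
    intro x hx k
    rw [norm_smul, Real.norm_eq_abs, abs_of_nonneg (hlam k)]
    have h1 : ‖((σ' x) ((σ x) (e k))) (e k)‖ ≤ ‖(σ' x) ((σ x) (e k))‖ * ‖(e k : E)‖ :=
      ContinuousLinearMap.le_opNorm _ _
    have h2 : ‖(σ' x) ((σ x) (e k))‖ ≤ ‖σ' x‖ * ‖(σ x) (e k)‖ :=
      ContinuousLinearMap.le_opNorm _ _
    have h3 : ‖(σ x) (e k)‖ ≤ ‖σ x‖ * ‖(e k : E)‖ := ContinuousLinearMap.le_opNorm _ _
    rw [hek k] at h1 h3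
    simp only [mul_one] at h1 h3
    have : ‖((σ' x) ((σ x) (e k))) (e k)‖ ≤ M' * M := by
      calc ‖((σ' x) ((σ x) (e k))) (e k)‖ ≤ ‖σ' x‖ * ‖(σ x) (e k)‖ := h1.trans h2
        _ ≤ M' * M := by
            apply mul_le_mul (hbddσ' x hx) (h3.trans (hbddσ x hx)) (norm_nonneg _)
              ((norm_nonneg (σ' x)).trans (hbddσ' x hx))
    exact mul_le_mul_of_nonneg_left this (hlam k)
  have hsummable : ∀ x ∈ U, Summable (fun k => lam k • ((σ' x) ((σ x) (e k))) (e k)) := by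
    intro x hx
    exact Summable.of_norm_bounded (hsum.mul_right (M' * M)) (hterm x hx)
  refine ⟨hsummable, ?_⟩
  intro x hx y hy
  have hsx := hsummable x hx
  have hsy := hsummable y hy
  rw [← Summable.tsum_sub hsx hsy]
  -- termwise difference bound
  have hdiff : ∀ k, ‖lam k • ((σ' x) ((σ x) (e k))) (e k) -
      lam k • ((σ' y) ((σ y) (e k))) (e k)‖ ≤ lam k * ((L' * M + M' * L) * ‖x - y‖) := by
    intro k
    rw [← smul_sub, norm_smul, Real.norm_eq_abs, abs_of_nonneg (hlam k)]
    refine mul_le_mul_of_nonneg_left ?_ (hlam k)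
    have key : ((σ' x) ((σ x) (e k))) (e k) - ((σ' y) ((σ y) (e k))) (e k) =
        (((σ' x) - (σ' y)) ((σ x) (e k))) (e k) +
        ((σ' y) (((σ x) - (σ y)) (e k))) (e k) := by
      simp [ContinuousLinearMap.sub_apply, map_sub]
    rw [key]
    have hA : ‖(((σ' x) - (σ' y)) ((σ x) (e k))) (e k)‖ ≤ (L' * ‖x - y‖) * M := by
      calc ‖(((σ' x) - (σ' y)) ((σ x) (e k))) (e k)‖
          ≤ ‖((σ' x) - (σ' y)) ((σ x) (e k))‖ * ‖(e k : E)‖ :=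
            ContinuousLinearMap.le_opNorm _ _
        _ = ‖((σ' x) - (σ' y)) ((σ x) (e k))‖ := by rw [hek k, mul_one]
        _ ≤ ‖(σ' x) - (σ' y)‖ * ‖(σ x) (e k)‖ := ContinuousLinearMap.le_opNorm _ _
        _ ≤ (L' * ‖x - y‖) * M := by
            refine mul_le_mul (hlipσ' x hx y hy) ?_ (norm_nonneg _)
              (by positivity)
            calc ‖(σ x) (e k)‖ ≤ ‖σ x‖ * ‖(e k : E)‖ := ContinuousLinearMap.le_opNorm _ _
              _ = ‖σ x‖ := by rw [hek k, mul_one]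
              _ ≤ M := hbddσ x hx
    have hB : ‖((σ' y) (((σ x) - (σ y)) (e k))) (e k)‖ ≤ M' * (L * ‖x - y‖) := by
      calc ‖((σ' y) (((σ x) - (σ y)) (e k))) (e k)‖
          ≤ ‖(σ' y) (((σ x) - (σ y)) (e k))‖ * ‖(e k : E)‖ :=
            ContinuousLinearMap.le_opNorm _ _
        _ = ‖(σ' y) (((σ x) - (σ y)) (e k))‖ := by rw [hek k, mul_one]
        _ ≤ ‖σ' y‖ * ‖((σ x) - (σ y)) (e k)‖ := ContinuousLinearMap.le_opNorm _ _
        _ ≤ M' * (L * ‖x - y‖) := by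
            refine mul_le_mul (hbddσ' y hy) ?_ (norm_nonneg _) hM'
            calc ‖((σ x) - (σ y)) (e k)‖ ≤ ‖(σ x) - (σ y)‖ * ‖(e k : E)‖ :=
                ContinuousLinearMap.le_opNorm _ _
              _ = ‖(σ x) - (σ y)‖ := by rw [hek k, mul_one]
              _ ≤ L * ‖x - y‖ := hlipσ x hx y hy
    calc ‖(((σ' x) - (σ' y)) ((σ x) (e k))) (e k) + ((σ' y) (((σ x) - (σ y)) (e k))) (e k)‖
        ≤ ‖(((σ' x) - (σ' y)) ((σ x) (e k))) (e k)‖ +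
          ‖((σ' y) (((σ x) - (σ y)) (e k))) (e k)‖ := norm_add_le _ _
      _ ≤ (L' * ‖x - y‖) * M + M' * (L * ‖x - y‖) := add_le_add hA hB
      _ = (L' * M + M' * L) * ‖x - y‖ := by ring
  calc ‖∑' k, (lam k • ((σ' x) ((σ x) (e k))) (e k) -
        lam k • ((σ' y) ((σ y) (e k))) (e k))‖
      ≤ ∑' k, lam k * ((L' * M + M' * L) * ‖x - y‖) := by
        refine tsum_of_norm_bounded ?_ hdiff
        exact (hsum.mul_right _).hasSum
    _ = (∑' k, lam k) * ((L' * M + M' * L) * ‖x - y‖) := tsum_mul_right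
    _ = (L' * M + M' * L) * (∑' k, lam k) * ‖x - y‖ := by ring
end

section
/- Let E, H, H̃ be separable real Hilbert spaces, let (e_k)_{k∈ℕ} be a Hilbert basis of E, and let (λ_k)_{k∈ℕ} be nonnegative real numbers with ∑_k λ_k < ∞. Let f : H → H̃ be twice continuously Fréchet differentiable and σ : H → L(E,H) continuously Fréchet differentiable, and set G(x) = Df(x) ∘ σ(x) ∈ L(E,H̃). Then for every x ∈ H the three families k ↦ λ_k (DG(x)(σ(x)e_k))(e_k), k ↦ λ_k (σ′(x)(σ(x)e_k))(e_k), and k ↦ λ_k (D²f(x)(σ(x)e_k))(σ(x)e_k) are summable, and ∑_k λ_k (DG(x)(σ(x)e_k))(e_k) = Df(x)( ∑_k λ_k (σ′(x)(σ(x)e_k))(e_k) ) + ∑_k λ_k (D²f(x)(σ(x)e_k))(σ(x)e_k), as an identity in H̃. -/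
/-- **The trace identity behind the Itô formula for Stratonovich differentials**
(equation (Ito_form_proof) in the paper):
`tr[D(Df∘σ)(x) σ(x) Q] = Df(x)(tr[σ′(x)σ(x)Q]) + tr[D²f(x)(σ(x)Q^{1/2})(σ(x)Q^{1/2})*]`,
where `(e k)` is a Hilbert basis of `E` and `(λ k)` are the (nonnegative, summable)
eigenvalues of the trace-class covariance operator `Q`. -/
theorem trace_identity_ito_stratonovich
    {E H H' : Type*}
    [NormedAddCommGroup E] [InnerProductSpace ℝ E] [CompleteSpace E]
    [TopologicalSpace.SeparableSpace E]
    [NormedAddCommGroup H] [InnerProductSpace ℝ H] [CompleteSpace H]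
    [TopologicalSpace.SeparableSpace H]
    [NormedAddCommGroup H'] [InnerProductSpace ℝ H'] [CompleteSpace H']
    [TopologicalSpace.SeparableSpace H']
    (e : HilbertBasis ℕ ℝ E) (lam : ℕ → ℝ) (hlam : ∀ k, 0 ≤ lam k)
    (hsum : Summable lam)
    (f : H → H') (hf : ContDiff ℝ 2 f)
    (σ : H → (E →L[ℝ] H)) (hσ : ContDiff ℝ 1 σ) :
    ∀ x : H,
      Summable (fun k =>
        lam k • ((fderiv ℝ (fun y : H => (fderiv ℝ f y).comp (σ y)) x)
          ((σ x) (e k))) (e k)) ∧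
      Summable (fun k => lam k • ((fderiv ℝ σ x) ((σ x) (e k))) (e k)) ∧
      Summable (fun k =>
        lam k • ((fderiv ℝ (fun y : H => fderiv ℝ f y) x) ((σ x) (e k))) ((σ x) (e k))) ∧
      (∑' k, lam k • ((fderiv ℝ (fun y : H => (fderiv ℝ f y).comp (σ y)) x)
            ((σ x) (e k))) (e k)) =
        (fderiv ℝ f x) (∑' k, lam k • ((fderiv ℝ σ x) ((σ x) (e k))) (e k)) +
          ∑' k, lam k • ((fderiv ℝ (fun y : H => fderiv ℝ f y) x)
            ((σ x) (e k))) ((σ x) (e k)) := by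
  intro x
  -- notation
  set A := fderiv ℝ f x with hA
  set S := σ x with hS
  set S' := fderiv ℝ σ x with hS'
  set D2 := fderiv ℝ (fun y : H => fderiv ℝ f y) x with hD2
  have hfd : ContDiff ℝ 1 (fun y : H => fderiv ℝ f y) := hf.fderiv_right (le_refl 2)
  have hc : HasFDerivAt (fun y : H => fderiv ℝ f y) D2 x :=
    ((hfd.differentiable one_ne_zero) x).hasFDerivAt
  have hd : HasFDerivAt σ S' x := ((hσ.differentiable one_ne_zero) x).hasFDerivAt
  have hG : fderiv ℝ (fun y : H => (fderiv ℝ f y).comp (σ y)) x =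
      ((ContinuousLinearMap.compL ℝ E H H' A).comp S' +
        ((ContinuousLinearMap.compL ℝ E H H').flip S).comp D2) :=
    (hc.clm_comp hd).fderiv
  -- norm of basis vectors
  have he : ∀ k, ‖e k‖ = 1 := fun k => e.orthonormal.1 k
  -- summability of the σ' term
  have hb : Summable (fun k => lam k • (S' (S (e k))) (e k)) := by
    apply Summable.of_norm_bounded (g := fun k => lam k * (‖S'‖ * ‖S‖))
      (hsum.mul_right _)
    intro k
    rw [norm_smul, Real.norm_eq_abs, abs_of_nonneg (hlam k)]
    refine mul_le_mul_of_nonneg_left ?_ (hlam k)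
    calc ‖(S' (S (e k))) (e k)‖ ≤ ‖S' (S (e k))‖ * ‖e k‖ :=
          (S' (S (e k))).le_opNorm _
      _ ≤ ‖S'‖ * ‖S (e k)‖ * 1 := by rw [he]; gcongr; exact S'.le_opNorm _
      _ ≤ ‖S'‖ * (‖S‖ * ‖e k‖) * 1 := by gcongr; exact S.le_opNorm _
      _ = ‖S'‖ * ‖S‖ := by rw [he]; ring
  -- summability of the D²f term
  have hcsum : Summable (fun k => lam k • (D2 (S (e k))) (S (e k))) := by
    apply Summable.of_norm_bounded (g := fun k => lam k * (‖D2‖ * ‖S‖ * ‖S‖))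
      (hsum.mul_right _)
    intro k
    rw [norm_smul, Real.norm_eq_abs, abs_of_nonneg (hlam k)]
    refine mul_le_mul_of_nonneg_left ?_ (hlam k)
    calc ‖(D2 (S (e k))) (S (e k))‖ ≤ ‖D2 (S (e k))‖ * ‖S (e k)‖ :=
          (D2 (S (e k))).le_opNorm _
      _ ≤ ‖D2‖ * ‖S (e k)‖ * ‖S (e k)‖ := by gcongr; exact D2.le_opNorm _
      _ ≤ ‖D2‖ * (‖S‖ * ‖e k‖) * (‖S‖ * ‖e k‖) := by
          gcongr <;> exact S.le_opNorm _
      _ = ‖D2‖ * ‖S‖ * ‖S‖ := by rw [he]; ring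
  -- pointwise identity for the composed derivative
  have hpt : ∀ k, lam k • ((fderiv ℝ (fun y : H => (fderiv ℝ f y).comp (σ y)) x)
      (S (e k))) (e k)
      = A (lam k • (S' (S (e k))) (e k)) + lam k • (D2 (S (e k))) (S (e k)) := by
    intro k
    rw [hG]
    simp [ContinuousLinearMap.add_apply, smul_add, map_smul, add_comm]
  have ha : Summable (fun k =>
      lam k • ((fderiv ℝ (fun y : H => (fderiv ℝ f y).comp (σ y)) x)
        (S (e k))) (e k)) := by
    rw [funext hpt]
    exact ((hb.map (A : H →L[ℝ] H') A.continuous)).add hcsum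
  refine ⟨ha, hb, hcsum, ?_⟩
  calc (∑' k, lam k • ((fderiv ℝ (fun y : H => (fderiv ℝ f y).comp (σ y)) x)
        (S (e k))) (e k))
      = ∑' k, (A (lam k • (S' (S (e k))) (e k)) + lam k • (D2 (S (e k))) (S (e k))) := by
        exact tsum_congr hpt
    _ = (∑' k, A (lam k • (S' (S (e k))) (e k))) +
          ∑' k, lam k • (D2 (S (e k))) (S (e k)) :=
        Summable.tsum_add (hb.map (A : H →L[ℝ] H') A.continuous) hcsum
    _ = A (∑' k, lam k • (S' (S (e k))) (e k)) +
          ∑' k, lam k • (D2 (S (e k))) (S (e k)) := by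
        rw [A.map_tsum hb]
end

section
/- Let (Ω, 𝒜, P) be a probability space, let E be a separable real Hilbert space, let t ≥ 0, let (σ_k)_{k∈ℕ} be a sequence in E with ∑_k ‖σ_k‖² < ∞, and let (X_k)_{k∈ℕ} be independent real-valued random variables each distributed as a centred Gaussian with variance t. Then the sequence of partial sums S_n = ∑_{k<n} σ_k · X_k converges in L²(Ω, P; E) to a limit S, and the limit satisfies E[‖S‖²] = t · ∑_k ‖σ_k‖². -/
open MeasureTheory ProbabilityTheory Filter Real
open scoped NNReal ENNReal

lemma gaussianReal_integral_eq_density (v : ℝ≥0) (hv : v ≠ 0) (g : ℝ → ℝ) :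
    ∫ x, g x ∂(gaussianReal 0 v) = ∫ x, gaussianPDFReal 0 v x * g x := by
  rw [gaussianReal_of_var_ne_zero _ hv]
  have hd : gaussianPDF 0 v = fun x => ((Real.toNNReal (gaussianPDFReal 0 v x) : ℝ≥0) : ℝ≥0∞) :=
    rfl
  rw [hd, integral_withDensity_eq_integral_smul
    ((measurable_gaussianPDFReal 0 v).real_toNNReal) g]
  refine integral_congr_ae (Filter.Eventually.of_forall fun x => ?_)
  simp [NNReal.smul_def, Real.coe_toNNReal _ (gaussianPDFReal_nonneg 0 v x)]

lemma gaussianReal_integrable_iff_density (v : ℝ≥0) (hv : v ≠ 0) (g : ℝ → ℝ) :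
    Integrable g (gaussianReal 0 v) ↔
      Integrable (fun x => g x * gaussianPDFReal 0 v x) (volume : Measure ℝ) := by
  rw [gaussianReal_of_var_ne_zero _ hv]
  rw [integrable_withDensity_iff (measurable_gaussianPDF 0 v)
    (Filter.Eventually.of_forall fun x => ENNReal.ofReal_lt_top)]
  refine integrable_congr (Filter.Eventually.of_forall fun x => ?_)
  simp [gaussianPDF_def, ENNReal.toReal_ofReal (gaussianPDFReal_nonneg 0 v x)]

lemma integrable_sq_exp_neg_mul_sq' {b : ℝ} (hb : 0 < b) :
    Integrable (fun x : ℝ => x ^ 2 * Real.exp (-b * x ^ 2)) (volume : Measure ℝ) := by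
  have h := integrable_rpow_mul_exp_neg_mul_sq hb (s := 2) (by norm_num)
  refine h.congr (Filter.Eventually.of_forall fun x => ?_)
  simp only [Real.rpow_two]

lemma integral_sq_exp_neg_mul_sq' {b : ℝ} (hb : 0 < b) :
    ∫ x : ℝ, x ^ 2 * Real.exp (-b * x ^ 2)
      = 2 * (b ^ (-(3 : ℝ) / 2) * (1 / 2) * Real.Gamma (3 / 2)) := by
  have h1 : ∫ x : ℝ, x ^ 2 * Real.exp (-b * x ^ 2)
      = ∫ x : ℝ, (fun y : ℝ => y ^ 2 * Real.exp (-b * y ^ 2)) |x| := by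
    refine integral_congr_ae (Filter.Eventually.of_forall fun x => ?_)
    simp [sq_abs]
  have h3 := integral_comp_abs (f := fun y : ℝ => y ^ 2 * Real.exp (-b * y ^ 2))
  rw [h1, h3]
  have h2 : ∫ x in Set.Ioi (0 : ℝ), x ^ 2 * Real.exp (-b * x ^ 2)
      = ∫ x in Set.Ioi (0 : ℝ), x ^ (2 : ℝ) * Real.exp (-b * x ^ (2 : ℝ)) := by
    refine integral_congr_ae (Filter.Eventually.of_forall fun x => ?_)
    simp only [Real.rpow_two]
  rw [h2, integral_rpow_mul_exp_neg_mul_rpow two_pos (by norm_num : (-1 : ℝ) < 2) hb]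
  norm_num

lemma Gamma_three_halves' : Real.Gamma (3 / 2) = Real.sqrt π / 2 := by
  rw [show (3 / 2 : ℝ) = 1 / 2 + 1 by norm_num, Real.Gamma_add_one (by norm_num),
    Real.Gamma_one_half_eq]
  ring

lemma gaussianReal_integrable_sq' (v : ℝ≥0) :
    Integrable (fun x : ℝ => x ^ 2) (gaussianReal 0 v) := by
  by_cases hv : v = 0
  · rw [hv, gaussianReal_zero_var]
    have hae : (fun x : ℝ => x ^ 2) =ᵐ[Measure.dirac (0 : ℝ)] fun _ => (0 : ℝ) := by
      rw [MeasureTheory.ae_dirac_eq]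
      exact Filter.eventually_pure.mpr (by norm_num)
    exact (integrable_const (0 : ℝ)).congr hae.symm
  · rw [gaussianReal_integrable_iff_density v hv]
    have hvpos : (0 : ℝ) < (v : ℝ) := by exact_mod_cast pos_iff_ne_zero.mpr hv
    have hb : (0 : ℝ) < (2 * (v : ℝ))⁻¹ := by positivity
    have h := (integrable_sq_exp_neg_mul_sq' hb).const_mul (Real.sqrt (2 * π * v))⁻¹
    refine h.congr (Filter.Eventually.of_forall fun x => ?_)
    show _ = x ^ 2 * gaussianPDFReal 0 v x
    unfold gaussianPDFReal
    rw [show -(x - 0) ^ 2 / (2 * (v : ℝ)) = -(2 * (v : ℝ))⁻¹ * x ^ 2 by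
      rw [sub_zero]; field_simp]
    ring

lemma gaussianReal_integral_id' (v : ℝ≥0) : ∫ x, x ∂(gaussianReal 0 v) = 0 := by
  by_cases hv : v = 0
  · rw [hv, gaussianReal_zero_var]
    simp
  · rw [gaussianReal_integral_eq_density v hv]
    set G : ℝ → ℝ := fun x => gaussianPDFReal 0 v x * x with hG
    have hodd : ∀ x, G (-x) = -G x := by
      intro x
      simp only [hG, gaussianPDFReal, sub_zero, neg_sq, mul_neg]
    have h1 : ∫ x, G x = ∫ x, G (-x) :=
      (MeasureTheory.integral_neg_eq_self G (volume : Measure ℝ)).symm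
    have h2 : ∫ x, G (-x) = -∫ x, G x := by
      simp_rw [hodd]
      exact integral_neg G
    have : ∫ x, G x = 0 := by linarith [h1.trans h2]
    exact this

lemma gaussianReal_integral_sq' (v : ℝ≥0) :
    ∫ x, x ^ 2 ∂(gaussianReal 0 v) = (v : ℝ) := by
  by_cases hv : v = 0
  · rw [hv, gaussianReal_zero_var]
    simp
  · rw [gaussianReal_integral_eq_density v hv]
    have hvpos : (0 : ℝ) < (v : ℝ) := by exact_mod_cast pos_iff_ne_zero.mpr hv
    set u : ℝ := 2 * (v : ℝ) with hu
    have hupos : (0 : ℝ) < u := by positivity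
    have hb : (0 : ℝ) < u⁻¹ := by positivity
    have hpt : ∀ x : ℝ, gaussianPDFReal 0 v x * x ^ 2
        = (Real.sqrt (2 * π * v))⁻¹ * (x ^ 2 * Real.exp (-u⁻¹ * x ^ 2)) := by
      intro x
      unfold gaussianPDFReal
      rw [show -(x - 0) ^ 2 / (2 * (v : ℝ)) = -u⁻¹ * x ^ 2 by
        rw [sub_zero, hu]; field_simp]
      ring
    simp_rw [hpt]
    rw [integral_const_mul, integral_sq_exp_neg_mul_sq' hb, Gamma_three_halves']
    -- now pure algebra
    have hinv : (u⁻¹ : ℝ) ^ (-(3 : ℝ) / 2) = u ^ ((3 : ℝ) / 2) := by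
      rw [Real.inv_rpow hupos.le, ← Real.rpow_neg hupos.le]
      norm_num
    rw [hinv]
    set s : ℝ := Real.sqrt u with hsdef
    have hspos : (0 : ℝ) < s := Real.sqrt_pos.mpr hupos
    have hs : s ^ 2 = u := Real.sq_sqrt hupos.le
    have hu32 : u ^ ((3 : ℝ) / 2) = s ^ 3 := by
      rw [← hs, ← Real.rpow_natCast s 2, ← Real.rpow_mul hspos.le,
        show (((2 : ℕ) : ℝ) * (3 / 2)) = ((3 : ℕ) : ℝ) by norm_num, Real.rpow_natCast]
    have hsqrt : Real.sqrt (2 * π * (v : ℝ)) = Real.sqrt π * s := by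
      rw [show 2 * π * (v : ℝ) = π * u by rw [hu]; ring, Real.sqrt_mul Real.pi_pos.le]
    have hπ : (0 : ℝ) < Real.sqrt π := Real.sqrt_pos.mpr Real.pi_pos
    rw [hsqrt, hu32]
    have hveq : (v : ℝ) = s ^ 2 / 2 := by rw [hs, hu]; ring
    rw [hveq]
    field_simp

/-- **Convergence of the trace-class Brownian motion series at a fixed time.**
Let `(σ k)` be a sequence in a separable real Hilbert space `E` with `∑ k, ‖σ k‖² < ∞`, let
`t ≥ 0`, and let `(X k)` be independent real random variables, each Gaussian `N(0, t)`.
Then the partial sums `S_n = ∑_{k<n} X k • σ k` converge in `L²(Ω, P; E)` to a limit `S`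
satisfying `E[‖S‖²] = t * ∑ k, ‖σ k‖²`. -/
theorem traceClass_brownian_series_converges
    {Ω : Type*} [MeasurableSpace Ω] (P : Measure Ω) [IsProbabilityMeasure P]
    {E : Type*} [NormedAddCommGroup E] [InnerProductSpace ℝ E] [CompleteSpace E]
    [TopologicalSpace.SeparableSpace E]
    (t : ℝ) (ht : 0 ≤ t)
    (σ : ℕ → E) (hσ : Summable (fun k => ‖σ k‖ ^ 2))
    (X : ℕ → Ω → ℝ) (hmeas : ∀ k, Measurable (X k))
    (hindep : iIndepFun X P)
    (hgauss : ∀ k, Measure.map (X k) P = gaussianReal 0 t.toNNReal) :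
    ∃ S : Ω → E, MemLp S 2 P ∧
      Tendsto (fun n => ∫ ω, ‖(∑ k ∈ Finset.range n, X k ω • σ k) - S ω‖ ^ 2 ∂P)
        atTop (nhds 0) ∧
      ∫ ω, ‖S ω‖ ^ 2 ∂P = t * ∑' k, ‖σ k‖ ^ 2 := by
  have hvt : ((t.toNNReal : ℝ≥0) : ℝ) = t := Real.coe_toNNReal t ht
  -- each X k is in L²
  have hX2 : ∀ k, MemLp (X k) 2 P := by
    intro k
    rw [memLp_two_iff_integrable_sq (hmeas k).aestronglyMeasurable]
    have h1 : Integrable (fun x : ℝ => x ^ 2) (Measure.map (X k) P) := by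
      rw [hgauss k]; exact gaussianReal_integrable_sq' _
    have := (integrable_map_measure
      (measurable_id.pow_const 2).aestronglyMeasurable (hmeas k).aemeasurable).mp h1
    exact this
  have hXint : ∀ k, Integrable (X k) P := fun k =>
    memLp_one_iff_integrable.mp ((hX2 k).mono_exponent (by norm_num))
  have hXmean : ∀ k, ∫ ω, X k ω ∂P = 0 := by
    intro k
    have h1 : ∫ x, x ∂(Measure.map (X k) P) = ∫ ω, X k ω ∂P :=
      integral_map (hmeas k).aemeasurable aestronglyMeasurable_id
    rw [← h1, hgauss k, gaussianReal_integral_id']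
  have hXsq : ∀ k, ∫ ω, X k ω * X k ω ∂P = t := by
    intro k
    have h1 : ∫ x, x ^ 2 ∂(Measure.map (X k) P) = ∫ ω, (X k ω) ^ 2 ∂P :=
      integral_map (hmeas k).aemeasurable (measurable_id.pow_const 2).aestronglyMeasurable
    have h2 : ∫ ω, X k ω * X k ω ∂P = ∫ ω, (X k ω) ^ 2 ∂P := by
      simp_rw [← sq]
    rw [h2, ← h1, hgauss k, gaussianReal_integral_sq', hvt]
  have hprod_int : ∀ j k, Integrable (fun ω => X j ω * X k ω) P := by
    intro j k
    have h := (hX2 k).smul (φ := X j) (hX2 j)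
      (p := 2) (q := 2) (r := 1)
    have := memLp_one_iff_integrable.mp h
    exact this
  have hcross : ∀ j k, j ≠ k → ∫ ω, X j ω * X k ω ∂P = 0 := by
    intro j k hjk
    have h := IndepFun.integral_mul_eq_mul_integral (hindep.indepFun hjk)
      (hmeas j).aestronglyMeasurable (hmeas k).aestronglyMeasurable
    have h' : ∫ ω, X j ω * X k ω ∂P = (∫ ω, X j ω ∂P) * ∫ ω, X k ω ∂P := h
    rw [h', hXmean j, hXmean k, mul_zero]
  -- the key second-moment identity for finite sums
  have hI : ∀ s : Finset ℕ,
      ∫ ω, ‖∑ k ∈ s, X k ω • σ k‖ ^ 2 ∂P = t * ∑ k ∈ s, ‖σ k‖ ^ 2 := by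
    intro s
    have expand : ∀ ω : Ω, ‖∑ k ∈ s, X k ω • σ k‖ ^ 2
        = ∑ j ∈ s, ∑ k ∈ s, X j ω * X k ω * (inner ℝ (σ j) (σ k) : ℝ) := by
      intro ω
      rw [← real_inner_self_eq_norm_sq, sum_inner]
      refine Finset.sum_congr rfl fun j _ => ?_
      rw [inner_sum]
      refine Finset.sum_congr rfl fun k _ => ?_
      rw [real_inner_smul_left, real_inner_smul_right]
      ring
    simp_rw [expand]
    rw [integral_finset_sum s (fun j _ =>
      integrable_finset_sum s (fun k _ => (hprod_int j k).mul_const _))]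
    have step : ∀ j ∈ s, ∫ ω, ∑ k ∈ s, X j ω * X k ω * (inner ℝ (σ j) (σ k) : ℝ) ∂P
        = ∑ k ∈ s, (∫ ω, X j ω * X k ω ∂P) * (inner ℝ (σ j) (σ k) : ℝ) := by
      intro j _
      rw [integral_finset_sum s (fun k _ => (hprod_int j k).mul_const _)]
      exact Finset.sum_congr rfl fun k _ => integral_mul_const _ _
    rw [Finset.sum_congr rfl step]
    have diag : ∀ j ∈ s,
        ∑ k ∈ s, (∫ ω, X j ω * X k ω ∂P) * (inner ℝ (σ j) (σ k) : ℝ) = t * ‖σ j‖ ^ 2 := by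
      intro j hj
      rw [Finset.sum_eq_single j]
      · rw [hXsq j, real_inner_self_eq_norm_sq]
      · intro k _ hkj
        rw [hcross j k (fun h => hkj h.symm), zero_mul]
      · intro h; exact absurd hj h
    rw [Finset.sum_congr rfl diag, ← Finset.mul_sum]
  -- membership in L² of the partial sums
  have hfk : ∀ k, MemLp (fun ω => X k ω • σ k) 2 P := by
    intro k
    have h := MemLp.smul (f := fun _ : Ω => σ k) (φ := X k) (p := 2) (q := ⊤) (r := 2)
      (memLp_const _) (hX2 k)
    exact h
  have hmemf : ∀ n, MemLp (fun ω => ∑ k ∈ Finset.range n, X k ω • σ k) 2 P := by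
    intro n
    have := memLp_finsetSum' (μ := P) (p := 2) (Finset.range n)
      (f := fun k (ω : Ω) => X k ω • σ k) (fun i _ => hfk i)
    have hfun : (∑ k ∈ Finset.range n, fun ω => X k ω • σ k)
        = fun ω => ∑ k ∈ Finset.range n, X k ω • σ k := by
      ext ω; simp
    exact hfun ▸ this
  set T : ℕ → Lp E 2 P := fun n => (hmemf n).toLp _ with hT
  -- the L² norm as an integral
  have hnorm : ∀ g : Lp E 2 P, ‖g‖ ^ 2 = ∫ ω, ‖g ω‖ ^ 2 ∂P := by
    intro g
    rw [← real_inner_self_eq_norm_sq g, L2.inner_def]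
    refine integral_congr_ae (Filter.Eventually.of_forall fun ω => ?_)
    exact real_inner_self_eq_norm_sq _
  have hTnorm : ∀ n, ‖T n‖ ^ 2 = t * ∑ k ∈ Finset.range n, ‖σ k‖ ^ 2 := by
    intro n
    rw [hnorm]
    rw [integral_congr_ae (((hmemf n).coeFn_toLp).mono fun ω h => by rw [h])]
    exact hI _
  have hTsub : ∀ {n m : ℕ}, n ≤ m →
      ‖T m - T n‖ ^ 2 = t * ∑ k ∈ Finset.Ico n m, ‖σ k‖ ^ 2 := by
    intro n m hnm
    rw [hnorm]
    have hae : ∀ᵐ ω ∂P, ‖(T m - T n) ω‖ ^ 2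
        = ‖∑ k ∈ Finset.Ico n m, X k ω • σ k‖ ^ 2 := by
      filter_upwards [Lp.coeFn_sub (T m) (T n), (hmemf m).coeFn_toLp,
        (hmemf n).coeFn_toLp] with ω h1 h2 h3
      rw [h1, Pi.sub_apply, h2, h3, ← Finset.sum_Ico_eq_sub _ hnm]
    rw [integral_congr_ae hae]
    exact hI _
  -- Cauchy sequence
  have hA : Tendsto (fun n => t * ∑ k ∈ Finset.range n, ‖σ k‖ ^ 2)
      atTop (nhds (t * ∑' k, ‖σ k‖ ^ 2)) :=
    (hσ.hasSum.tendsto_sum_nat).const_mul t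
  have hAC : CauchySeq (fun n => t * ∑ k ∈ Finset.range n, ‖σ k‖ ^ 2) := hA.cauchySeq
  have hTC : CauchySeq T := by
    rw [Metric.cauchySeq_iff]
    intro ε hε
    obtain ⟨N, hN⟩ := Metric.cauchySeq_iff.mp hAC (ε ^ 2) (by positivity)
    refine ⟨N, fun m hm n hn => ?_⟩
    have key : ∀ a b : ℕ, N ≤ a → N ≤ b → b ≤ a → dist (T a) (T b) < ε := by
      intro a b ha hb hba
      have h2 : dist (T a) (T b) ^ 2 = t * ∑ k ∈ Finset.Ico b a, ‖σ k‖ ^ 2 := by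
        rw [dist_eq_norm]; exact hTsub hba
      have h3 : t * ∑ k ∈ Finset.Ico b a, ‖σ k‖ ^ 2
          = (t * ∑ k ∈ Finset.range a, ‖σ k‖ ^ 2)
            - t * ∑ k ∈ Finset.range b, ‖σ k‖ ^ 2 := by
        rw [Finset.sum_Ico_eq_sub _ hba, mul_sub]
      have h4 := hN a ha b hb
      rw [Real.dist_eq] at h4
      have h5 : dist (T a) (T b) ^ 2 < ε ^ 2 := by
        rw [h2, h3]
        calc (t * ∑ k ∈ Finset.range a, ‖σ k‖ ^ 2)
              - t * ∑ k ∈ Finset.range b, ‖σ k‖ ^ 2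
            ≤ |(t * ∑ k ∈ Finset.range a, ‖σ k‖ ^ 2)
              - t * ∑ k ∈ Finset.range b, ‖σ k‖ ^ 2| := le_abs_self _
          _ < ε ^ 2 := h4
      exact lt_of_pow_lt_pow_left₀ 2 hε.le h5
    rcases le_total n m with h | h
    · exact key m n hm hn h
    · rw [dist_comm]; exact key n m hn hm h
  obtain ⟨SL, hSL⟩ := cauchySeq_tendsto_of_complete hTC
  refine ⟨SL, Lp.memLp SL, ?_, ?_⟩
  · have heq : ∀ n, ∫ ω, ‖(∑ k ∈ Finset.range n, X k ω • σ k) - SL ω‖ ^ 2 ∂P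
        = ‖T n - SL‖ ^ 2 := by
      intro n
      rw [hnorm]
      refine integral_congr_ae ?_
      filter_upwards [Lp.coeFn_sub (T n) SL, (hmemf n).coeFn_toLp] with ω h1 h2
      rw [h1, Pi.sub_apply, h2]
    simp_rw [heq]
    have h0 : Tendsto (fun n => ‖T n - SL‖) atTop (nhds 0) := by
      rw [← tendsto_iff_norm_sub_tendsto_zero]
      exact hSL
    have := h0.pow 2
    simpa using this
  · have h1 : Tendsto (fun n => ‖T n‖ ^ 2) atTop (nhds (‖SL‖ ^ 2)) :=
      ((continuous_norm.tendsto SL).comp hSL).pow 2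
    have h2 : (fun n => ‖T n‖ ^ 2)
        = fun n => t * ∑ k ∈ Finset.range n, ‖σ k‖ ^ 2 := funext hTnorm
    rw [h2] at h1
    have h3 : ‖SL‖ ^ 2 = t * ∑' k, ‖σ k‖ ^ 2 := tendsto_nhds_unique h1 hA
    rw [← h3, hnorm SL]
end
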